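/- Let X be a nearest neighbor Z^d SFT such that every locally admissible configuration whose inner boundary consists only of good letters is globally admissible (as holds for ε-full X with ε < 1/(2d+2)). Then for any k and any family of configurations w_t ∈ L_{[1,n]^d}(X) with inner boundary in G, indexed by t ∈ [1,k]^d, the configuration obtained by placing w_t on the translated cube ∏ᵢ[1+(tᵢ-1)(n+1), tᵢ(n+1)-1] for each t is globally admissible; consequently |L_{[1,k(n+1)]^d}(X)| ≥ |L_{[1,n]^d}(X) ∩ ⟨G^Γ⟩|^{k^d} and h(X) ≥ (1/(n+1)^d) log|L_{[1,n]^d}(X) ∩ ⟨G^Γ⟩|. -/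
import Mathlib


open MeasureTheory

abbrev Site (d : ℕ) := Fin d → ℤ

def unitVec (d : ℕ) (i : Fin d) : Site d := fun j => if j = i then 1 else 0

def adjSites {d : ℕ} (u v : Site d) : Prop :=
  ∃ i : Fin d, v = u + unitVec d i ∨ u = v + unitVec d i

def innerBd {d : ℕ} (S : Set (Site d)) : Set (Site d) :=
  {v | v ∈ S ∧ ∃ u, u ∉ S ∧ adjSites v u}

def outerBd {d : ℕ} (S : Set (Site d)) : Set (Site d) :=
  {v | v ∉ S ∧ ∃ u, u ∈ S ∧ adjSites v u}

def cube (d n : ℕ) : Set (Site d) := {v | ∀ i, 1 ≤ v i ∧ v i ≤ (n : ℤ)}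

def symBox (d n : ℕ) : Set (Site d) := {v | ∀ i, |v i| ≤ (n : ℤ)}

def symBoxR (d : ℕ) (r : ℝ) : Set (Site d) := {v | ∀ i, |((v i : ℤ) : ℝ)| ≤ r}

/-- A nearest neighbor `ℤ^d` SFT is specified by its allowed adjacent pairs
in each of the `d` cardinal directions: `adj i a b` means the pair `a b` may
appear at sites `v, v + e i`. -/
structure NNSFT (d : ℕ) (A : Type) where
  adj : Fin d → A → A → Prop

namespace NNSFT

variable {d : ℕ} {A : Type}

/-- The points of the subshift. -/
def pts (X : NNSFT d A) : Set (Site d → A) :=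
  {x | ∀ (i : Fin d) (v : Site d), X.adj i (x v) (x (v + unitVec d i))}

/-- A configuration on shape `S` is locally admissible if it contains no
forbidden adjacent pair inside `S`. -/
def locAdm (X : NNSFT d A) (S : Set (Site d)) (w : Site d → A) : Prop :=
  ∀ (i : Fin d) (v : Site d), v ∈ S → v + unitVec d i ∈ S →
    X.adj i (w v) (w (v + unitVec d i))

/-- A configuration on shape `S` is globally admissible if it extends to a
point of the subshift. -/
def globAdm (X : NNSFT d A) (S : Set (Site d)) (w : Site d → A) : Prop :=
  ∃ x ∈ X.pts, ∀ v ∈ S, x v = w v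

/-- `X` is `ε`-full with good-letter set `G`. -/
def epsFullWith [Fintype A] (X : NNSFT d A) (ε : ℝ) (G : Set A) : Prop :=
  ((G.ncard : ℝ) > (1 - ε) * Fintype.card A) ∧
  ∀ g ∈ G, ∀ i : Fin d,
    (({a : A | X.adj i g a}.ncard : ℝ) > (1 - ε) * Fintype.card A) ∧
    (({a : A | X.adj i a g}.ncard : ℝ) > (1 - ε) * Fintype.card A)

/-- `X` is `ε`-full. -/
def epsFull [Fintype A] (X : NNSFT d A) (ε : ℝ) : Prop :=
  ∃ G : Set A, X.epsFullWith ε G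

/-- The globally admissible patterns on shape `S`. -/
def langSet (X : NNSFT d A) (S : Set (Site d)) : Set (S → A) :=
  (fun x => S.restrict x) '' X.pts

/-- The number of globally admissible patterns on shape `S`. -/
noncomputable def langCard (X : NNSFT d A) (S : Set (Site d)) : ℕ :=
  (X.langSet S).ncard

/-- Topological entropy, as the infimum (= limit, by subadditivity) of the
normalized log-counts of globally admissible patterns on cubes. -/
noncomputable def entropy (X : NNSFT d A) : ℝ :=
  ⨅ n : ℕ+, Real.log (X.langCard (cube d (n : ℕ))) / ((n : ℕ) : ℝ) ^ d

end NNSFT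

instance confMS (d : ℕ) (A : Type) : MeasurableSpace (Site d → A) :=
  @MeasurableSpace.pi (Site d) (fun _ => A) (fun _ => ⊤)

def shiftMap {d : ℕ} {A : Type} (t : Site d) (x : Site d → A) : Site d → A :=
  fun v => x (v + t)

/-- Shift invariance of a measure on the full shift. -/
def shiftInv {d : ℕ} {A : Type} (μ : Measure (Site d → A)) : Prop :=
  ∀ t : Site d, Measure.map (shiftMap t) μ = μ

/-- The cylinder set of configurations agreeing with `w` on `S`. -/
def cylEvent {d : ℕ} {A : Type} (S : Set (Site d)) (w : Site d → A) :
    Set (Site d → A) := {x | ∀ v ∈ S, x v = w v}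

/-- Shannon entropy of the marginal of `μ` on the cube `[1,n]^d`. -/
noncomputable def blockEnt {d : ℕ} {A : Type} [Fintype A]
    (μ : Measure (Site d → A)) (n : ℕ) : ℝ :=
  ∑ w : (Fin d → Fin n) → A,
    Real.negMulLog
      ((μ {x | ∀ p : Fin d → Fin n, x (fun i => (p i : ℤ) + 1) = w p}).toReal)

/-- Measure-theoretic entropy, as the infimum (= limit, by subadditivity) of
normalized Shannon entropies of cube marginals. -/
noncomputable def measEnt {d : ℕ} {A : Type} [Fintype A]
    (μ : Measure (Site d → A)) : ℝ :=
  ⨅ n : ℕ+, blockEnt μ (n : ℕ) / ((n : ℕ) : ℝ) ^ d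

/-- `μ` is a measure of maximal entropy for `X`. -/
def NNSFT.isMME {d : ℕ} {A : Type} [Fintype A] (X : NNSFT d A)
    (μ : Measure (Site d → A)) : Prop :=
  IsProbabilityMeasure μ ∧ shiftInv μ ∧ μ X.pts = 1 ∧ measEnt μ = X.entropy

/-- `badConn bad S T x` : in the configuration `x` there is a path of
`bad`-letters from `S` to `T`. -/
def badConn {d : ℕ} {A : Type} (bad : A → Prop) (S T : Set (Site d))
    (x : Site d → A) : Prop :=
  ∃ (L : ℕ) (p : ℕ → Site d), p 0 ∈ S ∧ p L ∈ T ∧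
    (∀ j < L, adjSites (p j) (p (j + 1))) ∧ ∀ j ≤ L, bad (x (p j))

/-- The number of globally admissible patterns on `[1,n]^d` whose restriction
to the inner boundary consists only of `G`-letters. -/
noncomputable def NGcount {d : ℕ} {A : Type} (X : NNSFT d A) (G : Set A)
    (n : ℕ) : ℕ :=
  {w ∈ X.langSet (cube d n) |
    ∀ v : cube d n, (v : Site d) ∈ innerBd (cube d n) → w v ∈ G}.ncard

section AuxConcat

open Set

variable {d : ℕ} {A : Type}

lemma mem_cube' {n : ℕ} {v : Site d} : v ∈ cube d n ↔ ∀ i, 1 ≤ v i ∧ v i ≤ (n : ℤ) :=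
  Iff.rfl

lemma adjSites_sub {u v c : Site d} (h : adjSites u v) : adjSites (u - c) (v - c) := by
  obtain ⟨i, h | h⟩ := h
  · exact ⟨i, Or.inl (by rw [h]; abel)⟩
  · exact ⟨i, Or.inr (by rw [h]; abel)⟩

lemma cube_finite (d n : ℕ) : (cube d n).Finite := by
  apply Set.Finite.subset (Set.Finite.pi (fun _ : Fin d => Set.finite_Icc (1:ℤ) n))
  intro v hv i _
  exact Set.mem_Icc.mpr (hv i)

lemma pts_shift (X : NNSFT d A) {x : Site d → A} (hx : x ∈ X.pts) (c : Site d) :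
    (fun v => x (v + c)) ∈ X.pts := by
  intro i v
  have h := hx i (v + c)
  have he : v + c + unitVec d i = v + unitVec d i + c := by abel
  rwa [he] at h

lemma langSet_finite [Fintype A] (X : NNSFT d A) {S : Set (Site d)} (hS : S.Finite) :
    (X.langSet S).Finite := by
  haveI := hS.to_subtype
  exact Set.toFinite _

lemma ncard_univ_pi {ι : Type*} [Fintype ι] {β : ι → Type*} (t : ∀ i, Set (β i)) :
    (Set.univ.pi t).ncard = ∏ i, (t i).ncard := by
  have e : ↥(Set.univ.pi t) ≃ ∀ i, ↥(t i) :=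
    { toFun := fun f i => ⟨f.1 i, f.2 i (Set.mem_univ i)⟩
      invFun := fun f => ⟨fun i => (f i).1, fun i _ => (f i).2⟩
      left_inv := fun f => rfl
      right_inv := fun f => rfl }
  rw [← Nat.card_coe_set_eq, Nat.card_congr e, Nat.card_pi]
  simp [Nat.card_coe_set_eq]

lemma int_interval_uniq {n : ℕ} (hn : 1 ≤ n) {a b x : ℤ}
    (h1 : 1 + a * ((n:ℤ)+1) ≤ x) (h2 : x ≤ n + a * ((n:ℤ)+1))
    (h3 : 1 + b * ((n:ℤ)+1) ≤ x) (h4 : x ≤ n + b * ((n:ℤ)+1)) : a = b := by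
  by_contra hne
  rcases lt_or_gt_of_ne hne with h | h
  · have hmul := mul_le_mul_of_nonneg_right (Int.add_one_le_iff.mpr h)
      (show (0:ℤ) ≤ (n:ℤ)+1 by positivity)
    linarith
  · have hmul := mul_le_mul_of_nonneg_right (Int.add_one_le_iff.mpr h)
      (show (0:ℤ) ≤ (n:ℤ)+1 by positivity)
    linarith

lemma int_interval_adj {n : ℕ} (hn : 1 ≤ n) {a b x : ℤ}
    (h1 : 1 + a * ((n:ℤ)+1) ≤ x) (h2 : x ≤ n + a * ((n:ℤ)+1))
    (h3 : 1 + b * ((n:ℤ)+1) ≤ x + 1) (h4 : x + 1 ≤ n + b * ((n:ℤ)+1)) : a = b := by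
  by_contra hne
  rcases lt_or_gt_of_ne hne with h | h
  · have hmul := mul_le_mul_of_nonneg_right (Int.add_one_le_iff.mpr h)
      (show (0:ℤ) ≤ (n:ℤ)+1 by positivity)
    linarith
  · have hmul := mul_le_mul_of_nonneg_right (Int.add_one_le_iff.mpr h)
      (show (0:ℤ) ≤ (n:ℤ)+1 by positivity)
    linarith

lemma aux_point [Fintype A] (X : NNSFT d A) (G : Set A)
    (hG : ∀ (S : Set (Site d)) (w : Site d → A), S.Finite → X.locAdm S w →
      (∀ v ∈ innerBd S, w v ∈ G) → X.globAdm S w)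
    (n k : ℕ) (hn : 1 ≤ n) (hk : 1 ≤ k)
    (W : (Fin d → Fin k) → Site d → A)
    (hW1 : ∀ t, X.globAdm (cube d n) (W t))
    (hW2 : ∀ t, ∀ v ∈ innerBd (cube d n), W t v ∈ G) :
    ∃ x ∈ X.pts, ∀ (t : Fin d → Fin k), ∀ v ∈ cube d n,
      x (fun i => v i + (t i : ℤ) * ((n : ℤ) + 1)) = W t v := by
  classical
  set cv : (Fin d → Fin k) → Site d := fun t i => (t i : ℤ) * ((n:ℤ)+1) with hcv
  set C : (Fin d → Fin k) → Set (Site d) := fun t => {v | v - cv t ∈ cube d n} with hC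
  set S : Set (Site d) := ⋃ t, C t with hS
  have hmemC : ∀ t (v : Site d), v ∈ C t ↔
      ∀ i, 1 + (t i : ℤ) * ((n:ℤ)+1) ≤ v i ∧ v i ≤ (n:ℤ) + (t i : ℤ) * ((n:ℤ)+1) := by
    intro t v
    constructor
    · intro h i
      have h2 := (mem_cube'.1 h) i
      simp only [Pi.sub_apply, hcv] at h2
      omega
    · intro h
      intro i
      have h2 := h i
      simp only [Pi.sub_apply, hcv]
      omega
  have huniq : ∀ t t' (v : Site d), v ∈ C t → v ∈ C t' → t = t' := by
    intro t t' v h h'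
    funext j
    have h1 := (hmemC t v).1 h j
    have h2 := (hmemC t' v).1 h' j
    have h3 : ((t j : ℕ) : ℤ) = ((t' j : ℕ) : ℤ) :=
      int_interval_uniq hn h1.1 h1.2 h2.1 h2.2
    exact Fin.ext (by exact_mod_cast h3)
  have hadj : ∀ t t' (i : Fin d) (v : Site d), v ∈ C t → v + unitVec d i ∈ C t' → t' = t := by
    intro t t' i v h h'
    funext j
    have e1 := (hmemC t v).1 h j
    have e2 := (hmemC t' (v + unitVec d i)).1 h' j
    have hvj : (v + unitVec d i) j = v j + (unitVec d i j) := rfl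
    by_cases hji : j = i
    · have hu1 : unitVec d i j = 1 := by simp [unitVec, hji]
      rw [hvj, hu1] at e2
      have h3 : ((t j : ℕ) : ℤ) = ((t' j : ℕ) : ℤ) :=
        int_interval_adj hn e1.1 e1.2 e2.1 e2.2
      exact Fin.ext (by exact_mod_cast h3.symm)
    · have hu0 : unitVec d i j = 0 := by simp [unitVec, hji]
      rw [hvj, hu0, add_zero] at e2
      have h3 : ((t j : ℕ) : ℤ) = ((t' j : ℕ) : ℤ) :=
        int_interval_uniq hn e1.1 e1.2 e2.1 e2.2
      exact Fin.ext (by exact_mod_cast h3.symm)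
  have ht0 : Nonempty (Fin d → Fin k) := ⟨fun _ => ⟨0, hk⟩⟩
  obtain ⟨t0⟩ := ht0
  set x0 : Site d → A := fun v =>
    if h : ∃ t, v ∈ C t then W h.choose (v - cv h.choose) else W t0 0 with hx0def
  have hx0 : ∀ t (v : Site d), v ∈ C t → x0 v = W t (v - cv t) := by
    intro t v hv
    have h : ∃ t, v ∈ C t := ⟨t, hv⟩
    have hq := huniq h.choose t v h.choose_spec hv
    rw [hx0def]
    simp only [dif_pos h]
    rw [hq]
  have hSC : ∀ v ∈ S, ∃ t, v ∈ C t := fun v hv => Set.mem_iUnion.1 hv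
  have hfin : S.Finite := by
    apply Set.Finite.subset (cube_finite d (k*(n+1)))
    intro v hv
    obtain ⟨t, ht⟩ := hSC v hv
    rw [mem_cube']
    intro i
    have h1 := (hmemC t v).1 ht i
    have hti : ((t i : ℕ) : ℤ) ≤ (k:ℤ) - 1 := by
      have h2 := (t i).isLt
      omega
    have hnn : (0:ℤ) ≤ ((t i : ℕ):ℤ) * ((n:ℤ)+1) := by positivity
    have hmul := mul_le_mul_of_nonneg_right hti (show (0:ℤ) ≤ (n:ℤ)+1 by positivity)
    have hcast : ((k*(n+1) : ℕ) : ℤ) = (k:ℤ) * ((n:ℤ)+1) := by push_cast; ring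
    constructor
    · linarith [h1.1]
    · rw [hcast]; linarith [h1.2]
  have hloc : X.locAdm S x0 := by
    intro i v hv hv'
    obtain ⟨t, ht⟩ := hSC v hv
    obtain ⟨t', ht'⟩ := hSC _ hv'
    have htt : t' = t := hadj t t' i v ht ht'
    subst htt
    rw [hx0 t' v ht, hx0 t' _ ht']
    obtain ⟨y, hy, hyW⟩ := hW1 t'
    have hv1 : v - cv t' ∈ cube d n := ht
    have hv2 : (v + unitVec d i) - cv t' ∈ cube d n := ht'
    have he : (v + unitVec d i) - cv t' = (v - cv t') + unitVec d i := by abel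
    rw [he] at hv2 ⊢
    rw [← hyW (v - cv t') hv1, ← hyW _ hv2]
    exact hy i (v - cv t')
  have hbd : ∀ v ∈ innerBd S, x0 v ∈ G := by
    intro v hv
    obtain ⟨hvS, u, huS, hadj'⟩ := hv
    obtain ⟨t, ht⟩ := hSC v hvS
    rw [hx0 t v ht]
    apply hW2 t
    refine ⟨ht, u - cv t, ?_, adjSites_sub hadj'⟩
    intro hu
    exact huS (Set.mem_iUnion.2 ⟨t, hu⟩)
  obtain ⟨x, hx, hagree⟩ := hG S x0 hfin hloc hbd
  refine ⟨x, hx, ?_⟩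
  intro t v hv
  have hmem : v + cv t ∈ C t := by
    show (v + cv t) - cv t ∈ cube d n
    have he : v + cv t - cv t = v := by abel
    rwa [he]
  have hSmem : v + cv t ∈ S := Set.mem_iUnion.2 ⟨t, hmem⟩
  have hsite : (fun i => v i + (t i : ℤ) * ((n : ℤ) + 1)) = v + cv t := rfl
  rw [hsite, hagree _ hSmem, hx0 t _ hmem]
  congr 1
  abel


lemma mem_big {n k : ℕ} (hn : 1 ≤ n) (t : Fin d → Fin k) {v : Site d}
    (hv : v ∈ cube d n) :
    (v + fun i => (t i : ℤ) * ((n:ℤ)+1)) ∈ cube d (k * (n + 1)) := by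
  rw [mem_cube']
  intro i
  have h1 := (mem_cube'.1 hv) i
  have hti : ((t i : ℕ) : ℤ) ≤ (k:ℤ) - 1 := by
    have h2 := (t i).isLt
    omega
  have hnn : (0:ℤ) ≤ ((t i : ℕ):ℤ) * ((n:ℤ)+1) := by positivity
  have hmul := mul_le_mul_of_nonneg_right hti (show (0:ℤ) ≤ (n:ℤ)+1 by positivity)
  have hcast : ((k*(n+1) : ℕ) : ℤ) = (k:ℤ) * ((n:ℤ)+1) := by push_cast; ring
  have hva : (v + fun i => (t i : ℤ) * ((n:ℤ)+1)) i = v i + (t i : ℤ) * ((n:ℤ)+1) := rfl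
  rw [hva, hcast]
  constructor
  · linarith [h1.1]
  · linarith [h1.2]

lemma aux_count [Fintype A] (X : NNSFT d A) (G : Set A)
    (hG : ∀ (S : Set (Site d)) (w : Site d → A), S.Finite → X.locAdm S w →
      (∀ v ∈ innerBd S, w v ∈ G) → X.globAdm S w)
    (n k : ℕ) (hn : 1 ≤ n) (hk : 1 ≤ k) :
    X.langCard (cube d (k * (n + 1))) ≥ NGcount X G n ^ k ^ d := by
  classical
  set NGset : Set (↥(cube d n) → A) := {w ∈ X.langSet (cube d n) |
    ∀ v : cube d n, (v : Site d) ∈ innerBd (cube d n) → w v ∈ G} with hNG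
  have hcount : NGcount X G n = NGset.ncard := by rw [hNG]; rfl
  set D : Set ((Fin d → Fin k) → (↥(cube d n) → A)) :=
    Set.univ.pi (fun _ => NGset) with hD
  have hDcard : D.ncard = NGcount X G n ^ k ^ d := by
    rw [hD, ncard_univ_pi, Finset.prod_const, Finset.card_univ, Fintype.card_fun,
      Fintype.card_fin, Fintype.card_fin, hcount]
  rcases Nat.eq_zero_or_pos (NGcount X G n) with h0 | hpos
  · rw [ge_iff_le, h0, zero_pow (show k ^ d ≠ 0 by positivity)]
    exact Nat.zero_le _
  · have hne : NGset.Nonempty := by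
      apply Set.nonempty_of_ncard_ne_zero
      rw [← hcount]
      omega
    have key : ∀ F ∈ D, ∃ x ∈ X.pts, ∀ (t : Fin d → Fin k) (v : Site d) (hv : v ∈ cube d n),
        x (v + fun i => (t i : ℤ) * ((n:ℤ)+1)) = F t ⟨v, hv⟩ := by
      intro F hF
      have hFt : ∀ t, F t ∈ NGset := fun t => hF t (Set.mem_univ t)
      have hWex : ∀ t, ∃ w, w ∈ X.pts ∧ (cube d n).restrict w = F t := fun t => (hFt t).1
      choose W hWpts hWres using hWex
      obtain ⟨x, hx, hxa⟩ := aux_point X G hG n k hn hk W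
        (fun t => ⟨W t, hWpts t, fun v hv => rfl⟩)
        (fun t v hv => by
          have hvc : v ∈ cube d n := hv.1
          have hWF : W t v = F t ⟨v, hvc⟩ := by rw [← hWres t]; rfl
          rw [hWF]
          exact (hFt t).2 ⟨v, hvc⟩ hv)
      refine ⟨x, hx, fun t v hv => ?_⟩
      have h := hxa t v hv
      calc x (v + fun i => (t i : ℤ) * ((n:ℤ)+1)) = W t v := h
        _ = F t ⟨v, hv⟩ := by rw [← hWres t]; rfl
    choose xF hxF1 hxF2 using key
    obtain ⟨w0, hw0⟩ := hne
    have hA : Nonempty A := ⟨w0 ⟨fun _ => 1, fun i => ⟨le_refl 1, show (1:ℤ) ≤ (n:ℤ) by exact_mod_cast hn⟩⟩⟩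
    rw [ge_iff_le, ← hDcard]
    show D.ncard ≤ (X.langSet (cube d (k * (n + 1)))).ncard
    refine Set.ncard_le_ncard_of_injOn
      (fun F => if h : F ∈ D then (cube d (k*(n+1))).restrict (xF F h) else fun _ => hA.some)
      (fun F hF => ?_) (fun F hF F' hF' hEq => ?_) (langSet_finite X (cube_finite _ _))
    · simp only [dif_pos hF]
      exact ⟨xF F hF, hxF1 F hF, rfl⟩
    · simp only [dif_pos hF, dif_pos hF'] at hEq
      funext t v
      obtain ⟨v, hv⟩ := v
      have h1 := hxF2 F hF t v hv
      have h2 := hxF2 F' hF' t v hv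
      have hbig := mem_big hn t hv
      have h3 := congrFun hEq (⟨_, hbig⟩ : ↥(cube d (k*(n+1))))
      rw [← h1, ← h2]
      exact h3

lemma decomp_coord (m s : ℕ) (hm : 1 ≤ m) (x : ℤ) (h1 : 1 ≤ x) (h2 : x ≤ (m:ℤ)*s) :
    ∃ q : ℕ, q < s ∧ 1 ≤ x - (q:ℤ)*m ∧ x - (q:ℤ)*m ≤ m := by
  have hm' : (0:ℤ) < m := by exact_mod_cast hm
  set q : ℤ := (x-1) / m with hqdef
  have hq0 : 0 ≤ q := Int.ediv_nonneg (by omega) hm'.le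
  have hdm := Int.mul_ediv_add_emod (x-1) m
  have hr0 : 0 ≤ (x-1) % m := Int.emod_nonneg _ hm'.ne'
  have hr1 : (x-1) % m < m := Int.emod_lt_of_pos _ hm'
  have hqs : q < s := by
    by_contra h
    push_neg at h
    have hms : (m:ℤ)*s ≤ m*q := mul_le_mul_of_nonneg_left h hm'.le
    linarith
  refine ⟨q.toNat, ?_, ?_, ?_⟩
  · have h3 : (q.toNat : ℤ) < s := by rw [Int.toNat_of_nonneg hq0]; exact hqs
    exact_mod_cast h3
  · rw [Int.toNat_of_nonneg hq0]; linarith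
  · rw [Int.toNat_of_nonneg hq0]; linarith

lemma aux_sub [Fintype A] (X : NNSFT d A) (m s : ℕ) (hm : 1 ≤ m) :
    X.langCard (cube d (m * s)) ≤ X.langCard (cube d m) ^ s ^ d := by
  classical
  have hcast : ((m*s : ℕ):ℤ) = (m:ℤ)*s := by push_cast; ring
  have hsite : ∀ (t : Fin d → Fin s) (v : Site d), v ∈ cube d m →
      (v + fun i => (t i : ℤ) * (m:ℤ)) ∈ cube d (m*s) := by
    intro t v hv
    rw [mem_cube']
    intro i
    have h := (mem_cube'.1 hv) i
    have h2 : ((t i : ℕ):ℤ) ≤ (s:ℤ) - 1 := by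
      have := (t i).isLt; omega
    have hmul := mul_le_mul_of_nonneg_right h2 (show (0:ℤ) ≤ (m:ℤ) by positivity)
    have hnn : (0:ℤ) ≤ ((t i : ℕ):ℤ) * m := by positivity
    have hva : (v + fun i => (t i : ℤ) * (m:ℤ)) i = v i + (t i : ℤ) * m := rfl
    rw [hva, hcast]
    constructor
    · linarith [h.1]
    · nlinarith [h.2]
  have htarget : (Set.univ.pi (fun _ : Fin d → Fin s => X.langSet (cube d m))).ncard
      = X.langCard (cube d m) ^ s ^ d := by
    rw [ncard_univ_pi, Finset.prod_const, Finset.card_univ, Fintype.card_fun,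
      Fintype.card_fin, Fintype.card_fin]
    rfl
  show (X.langSet (cube d (m*s))).ncard ≤ _
  rw [← htarget]
  refine Set.ncard_le_ncard_of_injOn
    (fun w => fun t (v : ↥(cube d m)) => w ⟨v.1 + fun i => (t i : ℤ) * (m:ℤ), hsite t v.1 v.2⟩)
    (fun w hw => ?_) (fun w hw w' hw' hEq => ?_)
    (Set.Finite.pi fun _ => langSet_finite X (cube_finite d m))
  · rw [Set.mem_univ_pi]
    intro t
    obtain ⟨x, hx, hxw⟩ := hw
    subst hxw
    refine ⟨fun u => x (u + fun i => (t i : ℤ) * (m:ℤ)), pts_shift X hx _, ?_⟩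
    funext v
    rfl
  · funext u
    obtain ⟨u, hu⟩ := u
    have hu' := mem_cube'.1 hu
    have hdc : ∀ i, ∃ q : ℕ, q < s ∧ 1 ≤ u i - (q:ℤ)*m ∧ u i - (q:ℤ)*m ≤ m := fun i =>
      decomp_coord m s hm (u i) (hu' i).1 (by rw [← hcast]; exact (hu' i).2)
    choose q hq1 hq2 hq3 using hdc
    have hv : (fun i => u i - (q i : ℤ)*m) ∈ cube d m := fun i => ⟨hq2 i, hq3 i⟩
    set t : Fin d → Fin s := fun i => ⟨q i, hq1 i⟩ with htdef
    have h1 := congrFun (congrFun hEq t) (⟨fun i => u i - (q i : ℤ)*m, hv⟩ : ↥(cube d m))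
    have hsub : (⟨(fun i => u i - (q i : ℤ)*m) + (fun i => (t i : ℤ) * (m:ℤ)),
        hsite t _ hv⟩ : ↥(cube d (m*s))) = ⟨u, hu⟩ := by
      apply Subtype.ext
      funext i
      show u i - (q i : ℤ)*m + (q i : ℤ)*m = u i
      ring
    calc w ⟨u, hu⟩ = w _ := congrArg w hsub.symm
      _ = w' _ := h1
      _ = w' ⟨u, hu⟩ := congrArg w' hsub

lemma log_nat_nonneg (L : ℕ) : 0 ≤ Real.log L := by
  rcases Nat.eq_zero_or_pos L with h | h
  · simp [h]
  · exact Real.log_nonneg (by exact_mod_cast h)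


end AuxConcat


theorem concatenation_bound {d : ℕ} {A : Type} [Fintype A] (X : NNSFT d A)
    (G : Set A)
    (hG : ∀ (S : Set (Site d)) (w : Site d → A), S.Finite → X.locAdm S w →
      (∀ v ∈ innerBd S, w v ∈ G) → X.globAdm S w)
    (n k : ℕ) (hn : 1 ≤ n) (hk : 1 ≤ k) :
    (∀ W : (Fin d → Fin k) → Site d → A,
      (∀ t, X.globAdm (cube d n) (W t)) →
      (∀ t, ∀ v ∈ innerBd (cube d n), W t v ∈ G) →
      ∃ x ∈ X.pts, ∀ (t : Fin d → Fin k), ∀ v ∈ cube d n,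
        x (fun i => v i + (t i : ℤ) * ((n : ℤ) + 1)) = W t v) ∧
    X.langCard (cube d (k * (n + 1))) ≥ NGcount X G n ^ k ^ d ∧
    X.entropy ≥ Real.log (NGcount X G n) / ((n : ℝ) + 1) ^ d := by
  refine ⟨aux_point X G hG n k hn hk, aux_count X G hG n k hn hk, ?_⟩
  rw [ge_iff_le]
  unfold NNSFT.entropy
  refine le_ciInf fun m => ?_
  have h1 := aux_count X G hG n (m:ℕ) hn m.2
  have h2 := aux_sub X (m:ℕ) (n+1) m.2
  have h3 : NGcount X G n ^ (m:ℕ) ^ d ≤ X.langCard (cube d (m:ℕ)) ^ (n+1) ^ d :=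
    le_trans h1 h2
  set N := NGcount X G n with hN
  set L := X.langCard (cube d (m:ℕ)) with hL
  rcases Nat.eq_zero_or_pos N with h0 | hpos
  · rw [h0]
    simp only [Nat.cast_zero, Real.log_zero, zero_div]
    exact div_nonneg (log_nat_nonneg L) (by positivity)
  · have hL1 : 1 ≤ L := by
      by_contra h
      push_neg at h
      have hL0 : L = 0 := by omega
      rw [hL0, zero_pow (show (n+1)^d ≠ 0 by positivity)] at h3
      have := pow_pos hpos ((m:ℕ)^d)
      omega
    have hm0 : (0:ℝ) < ((m:ℕ):ℝ) := by exact_mod_cast m.2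
    have hN0 : (0:ℝ) < (N:ℝ) := by exact_mod_cast hpos
    have hcast : ((N:ℝ)) ^ ((m:ℕ)^d) ≤ (L:ℝ) ^ ((n+1)^d) := by exact_mod_cast h3
    have hlog := Real.log_le_log (pow_pos hN0 _) hcast
    rw [Real.log_pow, Real.log_pow] at hlog
    rw [div_le_div_iff₀ (by positivity) (by positivity)]
    push_cast at hlog ⊢
    nlinarith [hlog]
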